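/- Let γ > 0 and let k : [0,∞) → [0,∞) be continuously differentiable and strictly increasing with k(0) = γ and k(x) → +∞ as x → +∞. Let φ : [0,∞) → [0,∞) be the inverse of the map Ψ'(x) := k(x)(exp(γx) − 1), i.e. k(φ(x))·(exp(γ·φ(x)) − 1) = x for all x ≥ 0. Then φ is differentiable on (0, +∞) and for every x > 0 its derivative satisfies φ'(x) ≤ 1/(γ(x + γ)). -/

import Mathlib

open Filter Real Topology

theorem phi_deriv_upper_bound
    (γ : ℝ) (hγ : 0 < γ) (k φ : ℝ → ℝ)
    (hk_smooth : ContDiff ℝ 1 k)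
    (hk_mono : StrictMonoOn k (Set.Ici 0))
    (hk_nonneg : ∀ x ≥ (0 : ℝ), 0 ≤ k x)
    (hk0 : k 0 = γ)
    (hk_top : Tendsto k atTop atTop)
    (hφ_nonneg : ∀ x ≥ (0 : ℝ), 0 ≤ φ x)
    (hφ_inv : ∀ x ≥ (0 : ℝ), k (φ x) * (Real.exp (γ * φ x) - 1) = x) :
    ∀ x > (0 : ℝ), DifferentiableAt ℝ φ x ∧ deriv φ x ≤ 1 / (γ * (x + γ)) := by
  intro x hx
  set Ψ : ℝ → ℝ := fun t => k t * (Real.exp (γ * t) - 1) with hΨdef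
  -- Ψ is strictly monotone on Ici 0, hence injective there
  have hΨmono : StrictMonoOn Ψ (Set.Ici 0) := by
    intro a ha b hb hab
    have hka : 0 ≤ k a := hk_nonneg a ha
    have hkab : k a < k b := hk_mono ha hb hab
    have hea : (0:ℝ) ≤ Real.exp (γ * a) - 1 := by
      have : (1:ℝ) ≤ Real.exp (γ * a) := by
        rw [← Real.exp_zero]
        exact Real.exp_le_exp.2 (mul_nonneg hγ.le ha)
      linarith
    have heb : (0:ℝ) < Real.exp (γ * b) - 1 := by
      have hb0 : 0 < b := lt_of_le_of_lt ha hab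
      have : (1:ℝ) < Real.exp (γ * b) := by
        rw [← Real.exp_zero]
        exact Real.exp_lt_exp.2 (mul_pos hγ hb0)
      linarith
    have heab : Real.exp (γ * a) - 1 < Real.exp (γ * b) - 1 := by
      have : Real.exp (γ * a) < Real.exp (γ * b) :=
        Real.exp_lt_exp.2 (by nlinarith)
      linarith
    calc k a * (Real.exp (γ * a) - 1) ≤ k a * (Real.exp (γ * b) - 1) :=
          mul_le_mul_of_nonneg_left heab.le hka
      _ < k b * (Real.exp (γ * b) - 1) := by
          exact mul_lt_mul_of_pos_right hkab heb
  set y := φ x with hy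
  have hy0 : 0 ≤ y := hφ_nonneg x hx.le
  have hΨy : Ψ y = x := hφ_inv x hx.le
  have hypos : 0 < y := by
    rcases hy0.lt_or_eq with h | h
    · exact h
    · exfalso
      have : Ψ y = 0 := by simp [hΨdef, ← h, mul_comm]
      rw [hΨy] at this; linarith
  -- derivative of Ψ at y
  have hkd : HasStrictDerivAt k (deriv k y) y :=
    hk_smooth.hasStrictDerivAt one_ne_zero
  have hexp : HasStrictDerivAt (fun t : ℝ => Real.exp (γ * t) - 1)
      (Real.exp (γ * y) * γ) y := by
    have h1 : HasStrictDerivAt (fun t : ℝ => γ * t) γ y := by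
      simpa using (hasStrictDerivAt_id y).const_mul γ
    exact ((Real.hasStrictDerivAt_exp (γ * y)).comp y h1).sub_const 1
  have hΨd : HasStrictDerivAt Ψ
      (deriv k y * (Real.exp (γ * y) - 1) + k y * (Real.exp (γ * y) * γ)) y :=
    hkd.mul hexp
  -- deriv k y ≥ 0 from monotonicity
  have hk'nonneg : 0 ≤ deriv k y := by
    have hkderiv : HasDerivAt k (deriv k y) y := hkd.hasDerivAt
    have hslope : Tendsto (slope k y) (𝓝[>] y) (𝓝 (deriv k y)) :=
      (hasDerivAt_iff_tendsto_slope.1 hkderiv).mono_left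
        (nhdsWithin_mono y fun t ht => ne_of_gt ht)
    refine ge_of_tendsto hslope ?_
    filter_upwards [self_mem_nhdsWithin] with t ht
    have hty : y < t := ht
    have : k y ≤ k t := (hk_mono.monotoneOn) hy0 (hy0.trans hty.le) hty.le
    have hpos : 0 < t - y := by linarith
    simp only [slope_def_field]
    exact div_nonneg (by linarith) hpos.le
  -- the derivative is ≥ γ * (x + γ) > 0
  have hkey : k y * Real.exp (γ * y) ≥ x + γ := by
    have hexp1 : (1:ℝ) ≤ Real.exp (γ * y) := by
      rw [← Real.exp_zero]
      exact Real.exp_le_exp.2 (mul_nonneg hγ.le hy0)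
    have hkyγ : γ ≤ k y := by
      rw [← hk0]
      exact (hk_mono.monotoneOn) (Set.mem_Ici.2 (le_refl (0:ℝ))) hy0 hy0
    have : k y * Real.exp (γ * y) = x + k y := by
      have := hΨy
      simp only [hΨdef] at this
      ring_nf
      ring_nf at this
      linarith
    linarith
  set D := deriv k y * (Real.exp (γ * y) - 1) + k y * (Real.exp (γ * y) * γ) with hD
  have hexp1 : (1:ℝ) ≤ Real.exp (γ * y) := by
    rw [← Real.exp_zero]
    exact Real.exp_le_exp.2 (mul_nonneg hγ.le hy0)
  have hDge : γ * (x + γ) ≤ D := by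
    have h1 : 0 ≤ deriv k y * (Real.exp (γ * y) - 1) :=
      mul_nonneg hk'nonneg (by linarith)
    have h2 : γ * (x + γ) ≤ k y * (Real.exp (γ * y) * γ) := by
      have := mul_le_mul_of_nonneg_right hkey hγ.le
      nlinarith
    linarith
  have hDpos : 0 < D := lt_of_lt_of_le (by positivity) hDge
  have hDne : D ≠ 0 := ne_of_gt hDpos
  -- φ is a local left inverse of Ψ near y
  have hleft : ∀ᶠ t in 𝓝 y, φ (Ψ t) = t := by
    filter_upwards [eventually_gt_nhds hypos] with t ht
    have ht0 : (0:ℝ) ≤ t := ht.le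
    have hΨt0 : 0 ≤ Ψ t := by
      apply mul_nonneg (hk_nonneg t ht0)
      have : (1:ℝ) ≤ Real.exp (γ * t) := by
        rw [← Real.exp_zero]
        exact Real.exp_le_exp.2 (mul_nonneg hγ.le ht0)
      linarith
    have h1 : Ψ (φ (Ψ t)) = Ψ t := hφ_inv (Ψ t) hΨt0
    exact hΨmono.injOn (hφ_nonneg _ hΨt0) (Set.mem_Ici.2 ht0) h1
  have hφd : HasStrictDerivAt φ D⁻¹ x := by
    have := hΨd.to_local_left_inverse hDne hleft
    rwa [hΨy] at this
  refine ⟨hφd.hasDerivAt.differentiableAt, ?_⟩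
  rw [hφd.hasDerivAt.deriv]
  rw [one_div]
  exact inv_anti₀ (by positivity) hDge
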